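/- Let a < b, let f : ℝ → ℝ → ℝ be continuous and satisfy |f(t,u₁) − f(t,u₂)| ≤ L|u₁ − u₂| for all t ∈ [a,b] and u₁,u₂ ∈ ℝ, and let u : [a,b] → ℝ be continuously differentiable with u'(t) = f(t,u(t)) on [a,b]. Fix reals b₁, b₂, b₃, c₂, c₃, a₂₁, a₃₁, a₃₂ with b₁ + b₂ + b₃ = 1, a₂₁ = c₂, a₃₁ + a₃₂ = c₃, b₂c₂ + b₃c₃ = 1/2, b₂c₂² + b₃c₃² = 1/3 and a₃₂b₃c₂ = 1/6, and fix M ≥ 0. For each N ≥ 1 set h = (b−a)/N, t_n = a + nh, choose shape parameters e_{n,2}, e_{n,3} ∈ ℝ with |e_{n,2}| ≤ M and |e_{n,3}| ≤ M for 0 ≤ n ≤ N−1, and define v₀ = u(a) and v_{n+1} = v_n + h(b₁k₁ + b₂k₂ + b₃k₃), where k₁ = f(t_n, v_n), k₂ = f(t_n + c₂h, v_n·exp(−e_{n,2}(c₂h)²) + h a₂₁ k₁) and k₃ = f(t_n + c₃h, v_n·exp(−e_{n,3}(c₃h)²) + h(a₃₁k₁ + a₃₂k₂)). Then max_{0 ≤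 n ≤ N} |v_n − u(t_n)| → 0 as N → ∞ (uniformly over all admissible choices of the shape parameters). -/

import Mathlib

set_option maxHeartbeats 1000000

private lemma abs_mul_le_of_le {x y cx cy : ℝ} (hx : |x| ≤ cx) (hy : |y| ≤ cy) :
    |x * y| ≤ cx * cy := by
  rw [abs_mul]
  exact mul_le_mul hx hy (abs_nonneg _) ((abs_nonneg x).trans hx)

/-- Convergence of the three-stage RBF Runge–Kutta method with bounded shape
parameters, uniformly over all admissible choices of the shape parameters. -/
theorem stmt_7 (a b L : ℝ) (hab : a < b)
    (f : ℝ → ℝ → ℝ)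
    (hfc : Continuous (fun p : ℝ × ℝ => f p.1 p.2))
    (hlip : ∀ t ∈ Set.Icc a b, ∀ u₁ u₂ : ℝ, |f t u₁ - f t u₂| ≤ L * |u₁ - u₂|)
    (u : ℝ → ℝ)
    (hu : ∀ t ∈ Set.Icc a b, HasDerivAt u (f t (u t)) t)
    (b₁ b₂ b₃ c₂ c₃ a₂₁ a₃₁ a₃₂ : ℝ)
    (hb : b₁ + b₂ + b₃ = 1) (ha21 : a₂₁ = c₂) (ha3 : a₃₁ + a₃₂ = c₃)
    (hoc1 : b₂ * c₂ + b₃ * c₃ = 1 / 2)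
    (hoc2 : b₂ * c₂ ^ 2 + b₃ * c₃ ^ 2 = 1 / 3)
    (hoc3 : a₃₂ * b₃ * c₂ = 1 / 6)
    (M : ℝ) (hM : 0 ≤ M) :
    ∀ ε > 0, ∃ N₀ : ℕ, ∀ N : ℕ, N₀ ≤ N → 1 ≤ N →
      ∀ e₂ e₃ : ℕ → ℝ, (∀ n < N, |e₂ n| ≤ M) → (∀ n < N, |e₃ n| ≤ M) →
      ∀ v : ℕ → ℝ, v 0 = u a →
      (∀ n < N,
        v (n + 1) = v n + ((b - a) / N) *
          (b₁ * f (a + n * ((b - a) / N)) (v n) +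
           b₂ * f (a + n * ((b - a) / N) + c₂ * ((b - a) / N))
             (v n * Real.exp (-(e₂ n) * (c₂ * ((b - a) / N)) ^ 2) +
              ((b - a) / N) * a₂₁ * f (a + n * ((b - a) / N)) (v n)) +
           b₃ * f (a + n * ((b - a) / N) + c₃ * ((b - a) / N))
             (v n * Real.exp (-(e₃ n) * (c₃ * ((b - a) / N)) ^ 2) +
              ((b - a) / N) *
                (a₃₁ * f (a + n * ((b - a) / N)) (v n) +
                 a₃₂ * f (a + n * ((b - a) / N) + c₂ * ((b - a) / N))
                   (v n * Real.exp (-(e₂ n) * (c₂ * ((b - a) / N)) ^ 2) +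
                    ((b - a) / N) * a₂₁ * f (a + n * ((b - a) / N)) (v n)))))) →
      ∀ n ≤ N, |v n - u (a + n * ((b - a) / N))| < ε := by
  intro ε hε
  -- basic facts
  have hT : (0:ℝ) < b - a := sub_pos.mpr hab
  have haI : a ∈ Set.Icc a b := Set.left_mem_Icc.mpr hab.le
  have hL : 0 ≤ L := by
    have h1 := hlip a haI 0 1
    have h2 : |(0:ℝ) - 1| = 1 := by norm_num
    rw [h2, mul_one] at h1
    exact le_trans (abs_nonneg _) h1
  have hucont : ContinuousOn u (Set.Icc a b) :=
    fun t htx => ((hu t htx).continuousAt).continuousWithinAt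
  have hgc : ContinuousOn (fun s => f s (u s)) (Set.Icc a b) := by
    have hpair : ContinuousOn (fun s : ℝ => (s, u s)) (Set.Icc a b) :=
      continuousOn_id.prodMk hucont
    exact hfc.comp_continuousOn hpair
  -- bound on u
  obtain ⟨U0, hU0⟩ := (isCompact_Icc (a := a) (b := b)).exists_bound_of_continuousOn hucont
  set U : ℝ := max U0 0 with hUdef
  clear_value U
  have hU : ∀ t ∈ Set.Icc a b, |u t| ≤ U := by
    intro t htx
    have := hU0 t htx
    rw [Real.norm_eq_abs] at this
    rw [hUdef]
    exact this.trans (le_max_left _ _)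
  have hUnn : 0 ≤ U := by rw [hUdef]; exact le_max_right _ _
  -- constants
  set Q : ℝ := 1 + |c₂| + |c₃| with hQdef
  clear_value Q
  have hQ1 : 1 ≤ Q := by have := abs_nonneg c₂; have := abs_nonneg c₃; linarith
  have hQ0 : 0 ≤ Q := by linarith
  have hc₂Q : |c₂| ≤ Q := by have := abs_nonneg c₃; linarith
  have hc₃Q : |c₃| ≤ Q := by have := abs_nonneg c₂; linarith
  set A : ℝ := 1 + |a₂₁| + |a₃₁| + |a₃₂| with hAdef
  clear_value A
  have hA1 : 1 ≤ A := by
    have := abs_nonneg a₂₁; have := abs_nonneg a₃₁; have := abs_nonneg a₃₂; linarith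
  have hA0 : 0 ≤ A := by linarith
  have ha21A : |a₂₁| ≤ A := by have := abs_nonneg a₃₁; have := abs_nonneg a₃₂; linarith
  have ha31A : |a₃₁| ≤ A := by have := abs_nonneg a₂₁; have := abs_nonneg a₃₂; linarith
  have ha32A : |a₃₂| ≤ A := by have := abs_nonneg a₂₁; have := abs_nonneg a₃₁; linarith
  have ha3132A : |a₃₁| + |a₃₂| ≤ A := by have := abs_nonneg a₂₁; linarith
  set Bb : ℝ := 1 + |b₁| + |b₂| + |b₃| with hBbdef
  clear_value Bb
  have hBb1 : 1 ≤ Bb := by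
    have := abs_nonneg b₁; have := abs_nonneg b₂; have := abs_nonneg b₃; linarith
  have hBb0 : 0 ≤ Bb := by linarith
  have hb₁Bb : |b₁| ≤ Bb := by have := abs_nonneg b₂; have := abs_nonneg b₃; linarith
  have hb₂Bb : |b₂| ≤ Bb := by have := abs_nonneg b₁; have := abs_nonneg b₃; linarith
  have hb₃Bb : |b₃| ≤ Bb := by have := abs_nonneg b₁; have := abs_nonneg b₂; linarith
  have hb23Bb : |b₂| + |b₃| ≤ Bb := by have := abs_nonneg b₁; linarith
  set R : ℝ := 2 * U + 4 with hRdef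
  clear_value R
  have hR0 : 0 < R := by linarith
  set K : Set (ℝ × ℝ) := Set.Icc (a - Q) (b + Q) ×ˢ Set.Icc (-R) R with hKdef
  have hKcomp : IsCompact K := (isCompact_Icc).prod isCompact_Icc
  have hfK : ContinuousOn (fun p : ℝ × ℝ => f p.1 p.2) K := hfc.continuousOn
  obtain ⟨B0, hB0⟩ := hKcomp.exists_bound_of_continuousOn hfK
  set B : ℝ := max B0 0 with hBdef
  clear_value B
  have hBnn : 0 ≤ B := by rw [hBdef]; exact le_max_right _ _
  have hfB : ∀ s x : ℝ, s ∈ Set.Icc (a - Q) (b + Q) → |x| ≤ R → |f s x| ≤ B := by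
    intro s x hs hx
    have hmem : ((s, x) : ℝ × ℝ) ∈ K := Set.mem_prod.mpr ⟨hs, Set.mem_Icc.mpr (abs_le.mp hx)⟩
    have := hB0 (s, x) hmem
    rw [Real.norm_eq_abs] at this
    rw [hBdef]
    exact this.trans (le_max_left _ _)
  -- stability/consistency constants
  have hAL0 : 0 ≤ A * L := mul_nonneg hA0 hL
  set C₂ : ℝ := 2 + A * L with hC₂def
  clear_value C₂
  have hC₂0 : 0 ≤ C₂ := by rw [hC₂def]; linarith
  have hALC0 : 0 ≤ A * L * (1 + C₂) := mul_nonneg hAL0 (by linarith)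
  set C₃ : ℝ := 2 + A * L * (1 + C₂) with hC₃def
  clear_value C₃
  have hC₃0 : 0 ≤ C₃ := by rw [hC₃def]; linarith
  have hBbL0 : 0 ≤ Bb * L * (1 + C₂ + C₃) := mul_nonneg (mul_nonneg hBb0 hL) (by linarith)
  set Λ : ℝ := 1 + Bb * L * (1 + C₂ + C₃) with hΛdef
  clear_value Λ
  have hΛ1 : 1 ≤ Λ := by rw [hΛdef]; linarith
  have hΛ0 : 0 < Λ := by linarith
  have hBb2LA0 : 0 ≤ Bb * (2 * L * A + 4) := mul_nonneg hBb0 (by linarith)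
  set Ct : ℝ := Bb * (2 * L * A + 4) + Bb + 1 with hCtdef
  clear_value Ct
  have hCt1 : 1 ≤ Ct := by rw [hCtdef]; linarith
  have hCt0 : 0 < Ct := by linarith
  have hUMQ0 : 0 ≤ 2 * U * M * Q ^ 2 := by positivity
  have hAB0 : 0 ≤ A * B := mul_nonneg hA0 hBnn
  set C₁ : ℝ := 2 * U * M * Q ^ 2 + A * B with hC₁def
  clear_value C₁
  have hC₁0 : 0 ≤ C₁ := by rw [hC₁def]; linarith
  -- epsilon choices
  set εm : ℝ := min ε 1 with hεmdef
  have hεm0 : 0 < εm := lt_min hε one_pos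
  have hεm1 : εm ≤ 1 := min_le_right _ _
  set ε' : ℝ := εm * Λ / (2 * Real.exp (Λ * (b - a))) with hε'def
  clear_value ε'
  have hε'0 : 0 < ε' := by
    rw [hε'def]
    exact div_pos (mul_pos hεm0 hΛ0) (by positivity)
  set ε'' : ℝ := ε' / Ct with hε''def
  clear_value ε''
  have hε''0 : 0 < ε'' := by rw [hε''def]; exact div_pos hε'0 hCt0
  have hCtε : Ct * ε'' = ε' := by rw [hε''def]; field_simp
  -- uniform continuity of f on K
  have hufK := hKcomp.uniformContinuousOn_of_continuous hfK
  rw [Metric.uniformContinuousOn_iff] at hufK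
  obtain ⟨δf, hδf0, hδf⟩ := hufK ε'' hε''0
  -- uniform continuity of g on [a,b]
  have hug := (isCompact_Icc (a := a) (b := b)).uniformContinuousOn_of_continuous hgc
  rw [Metric.uniformContinuousOn_iff] at hug
  obtain ⟨δg, hδg0, hδg⟩ := hug ε'' hε''0
  -- step size threshold
  have hMQ10 : (0:ℝ) < 2 * (M * Q ^ 2 + 1) := by
    have := mul_nonneg hM (sq_nonneg Q); linarith
  have hAB10 : (0:ℝ) < A * B + 1 := by linarith
  set h₀ : ℝ := min 1 (min (δf / (Q + C₁ + 1)) (min (δg / 2)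
      (min (1 / (2 * (M * Q ^ 2 + 1))) (1 / (A * B + 1))))) with hh₀def
  have hh₀0 : 0 < h₀ := by
    refine lt_min one_pos (lt_min (div_pos hδf0 (by linarith)) (lt_min (by linarith)
      (lt_min (div_pos one_pos hMQ10) (div_pos one_pos hAB10))))
  refine ⟨⌈(b - a) / h₀⌉₊ + 1, ?_⟩
  intro N hNN₀ hN1 e₂ e₃ he₂ he₃ v hv0 hrec
  have hNpos : (0:ℝ) < N := by exact_mod_cast hN1
  set hs : ℝ := (b - a) / (N : ℝ) with hhsdef
  clear_value hs
  have hhs0 : 0 < hs := by rw [hhsdef]; exact div_pos hT hNpos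
  have hNhs : (N : ℝ) * hs = b - a := by rw [hhsdef]; field_simp
  have hhsh₀ : hs ≤ h₀ := by
    rw [hhsdef, div_le_iff₀ hNpos]
    have h1 : (b - a) / h₀ ≤ (⌈(b - a) / h₀⌉₊ : ℝ) := Nat.le_ceil _
    have h2 : ((⌈(b - a) / h₀⌉₊ + 1 : ℕ) : ℝ) ≤ (N : ℝ) := by exact_mod_cast hNN₀
    push_cast at h2
    have h3 : (b - a) / h₀ ≤ (N : ℝ) := by linarith
    rw [div_le_iff₀ hh₀0] at h3
    linarith [mul_comm h₀ (N:ℝ)]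
  have hhs1 : hs ≤ 1 := le_trans hhsh₀ (min_le_left _ _)
  have hhsδf : hs * (Q + C₁ + 1) ≤ δf := by
    have h1 : hs ≤ δf / (Q + C₁ + 1) :=
      le_trans hhsh₀ (le_trans (min_le_right _ _) (min_le_left _ _))
    rw [le_div_iff₀ (by linarith)] at h1
    linarith
  have hhsδg : hs ≤ δg / 2 :=
    le_trans hhsh₀ (le_trans (min_le_right _ _) (le_trans (min_le_right _ _) (min_le_left _ _)))
  have hhsM : hs * (2 * (M * Q ^ 2 + 1)) ≤ 1 := by
    have h1 : hs ≤ 1 / (2 * (M * Q ^ 2 + 1)) :=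
      le_trans hhsh₀ (le_trans (min_le_right _ _) (le_trans (min_le_right _ _)
        (le_trans (min_le_right _ _) (min_le_left _ _))))
    rw [le_div_iff₀ hMQ10] at h1
    linarith
  have hhsAB : hs * (A * B + 1) ≤ 1 := by
    have h1 : hs ≤ 1 / (A * B + 1) :=
      le_trans hhsh₀ (le_trans (min_le_right _ _) (le_trans (min_le_right _ _)
        (le_trans (min_le_right _ _) (min_le_right _ _))))
    rw [le_div_iff₀ hAB10] at h1
    linarith
  have hMQhs : M * Q ^ 2 * hs ^ 2 ≤ 1 / 2 := by
    have h4 : 0 ≤ hs * (M * Q ^ 2) := mul_nonneg hhs0.le (mul_nonneg hM (sq_nonneg Q))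
    have h5 : (hs * (M * Q ^ 2)) * hs ≤ (hs * (M * Q ^ 2)) * 1 :=
      mul_le_mul_of_nonneg_left hhs1 h4
    linarith [h5]
  have hABhs : hs * (A * B) ≤ 1 := by linarith
  -- the shift estimate from uniform continuity of f on K
  have hQC : (Q + C₁) * hs < δf := by linarith
  have hshift : ∀ s s' x x' : ℝ, s ∈ Set.Icc (a - Q) (b + Q) → s' ∈ Set.Icc (a - Q) (b + Q) →
      |x| ≤ R → |x'| ≤ R → |s - s'| ≤ (Q + C₁) * hs → |x - x'| ≤ (Q + C₁) * hs →
      |f s x - f s' x'| ≤ ε'' := by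
    intro s s' x x' hsm hs'm hxm hx'm hss hxx
    have hmem1 : ((s, x) : ℝ × ℝ) ∈ K := Set.mem_prod.mpr ⟨hsm, Set.mem_Icc.mpr (abs_le.mp hxm)⟩
    have hmem2 : ((s', x') : ℝ × ℝ) ∈ K :=
      Set.mem_prod.mpr ⟨hs'm, Set.mem_Icc.mpr (abs_le.mp hx'm)⟩
    have hdist : dist ((s, x) : ℝ × ℝ) (s', x') < δf := by
      rw [Prod.dist_eq, sup_lt_iff]
      constructor
      · rw [Real.dist_eq]; exact lt_of_le_of_lt hss hQC
      · rw [Real.dist_eq]; exact lt_of_le_of_lt hxx hQC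
    have := hδf (s, x) hmem1 (s', x') hmem2 hdist
    rw [Real.dist_eq] at this
    exact this.le
  -- the one-step estimate
  have key : ∀ n : ℕ, n < N → |v n - u (a + (n : ℝ) * hs)| ≤ 1 →
      |v (n + 1) - u (a + ((n + 1 : ℕ) : ℝ) * hs)| ≤
        (1 + Λ * hs) * |v n - u (a + (n : ℝ) * hs)| + hs * ε' := by
    intro n hnN hd1
    have hv' := hrec n hnN
    set t : ℝ := a + (n : ℝ) * hs with htdef
    have hnle : (n : ℝ) ≤ (N : ℝ) := by exact_mod_cast hnN.le
    have hn1le : ((n : ℝ) + 1) ≤ (N : ℝ) := by exact_mod_cast hnN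
    have hn0 : (0:ℝ) ≤ (n : ℝ) := Nat.cast_nonneg n
    have hnhs0 : 0 ≤ (n : ℝ) * hs := mul_nonneg hn0 hhs0.le
    have hnhsN : (n : ℝ) * hs ≤ (N : ℝ) * hs := mul_le_mul_of_nonneg_right hnle hhs0.le
    have hn1hsN : ((n : ℝ) + 1) * hs ≤ (N : ℝ) * hs := mul_le_mul_of_nonneg_right hn1le hhs0.le
    have ht : t ∈ Set.Icc a b := ⟨by rw [htdef]; linarith, by rw [htdef]; linarith⟩
    have hth : t + hs ∈ Set.Icc a b :=
      ⟨by rw [htdef]; linarith, by rw [htdef]; linarith⟩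
    have hidx : a + ((n + 1 : ℕ) : ℝ) * hs = t + hs := by rw [htdef]; push_cast; ring
    rw [hidx]
    set w : ℝ := u t with hwdef
    have hwU : |w| ≤ U := hU t ht
    have hd1' : |v n - w| ≤ 1 := hd1
    have hvb : |v n| ≤ U + 1 := by
      have h1 : |v n| ≤ |v n - w| + |w| := by
        calc |v n| = |(v n - w) + w| := by ring_nf
        _ ≤ |v n - w| + |w| := abs_add_le _ _
      linarith
    -- exponentials
    set E₂ : ℝ := Real.exp (-e₂ n * (c₂ * hs) ^ 2) with hE₂def
    set E₃ : ℝ := Real.exp (-e₃ n * (c₃ * hs) ^ 2) with hE₃def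
    have hEbound : ∀ e c : ℝ, |e| ≤ M → |c| ≤ Q →
        |Real.exp (-e * (c * hs) ^ 2) - 1| ≤ 2 * (M * Q ^ 2 * hs ^ 2) ∧
        Real.exp (-e * (c * hs) ^ 2) ≤ 2 := by
      intro e c he hc
      have habs : |(-e) * (c * hs) ^ 2| = |e| * (c ^ 2 * hs ^ 2) := by
        rw [abs_mul, abs_neg, abs_of_nonneg (sq_nonneg (c * hs))]
        ring_nf
      have hcQ : c ^ 2 ≤ Q ^ 2 := sq_le_sq' (by linarith [(abs_le.mp hc).1]) (abs_le.mp hc).2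
      have hc2hs : c ^ 2 * hs ^ 2 ≤ Q ^ 2 * hs ^ 2 :=
        mul_le_mul_of_nonneg_right hcQ (sq_nonneg hs)
      have harg : |(-e) * (c * hs) ^ 2| ≤ M * Q ^ 2 * hs ^ 2 := by
        rw [habs]
        calc |e| * (c ^ 2 * hs ^ 2) ≤ M * (Q ^ 2 * hs ^ 2) :=
              mul_le_mul he hc2hs (by positivity) hM
        _ = M * Q ^ 2 * hs ^ 2 := by ring
      have harg1 : |(-e) * (c * hs) ^ 2| ≤ 1 := by linarith
      have h1 := Real.abs_exp_sub_one_le harg1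
      have h2 : |Real.exp (-e * (c * hs) ^ 2) - 1| ≤ 2 * (M * Q ^ 2 * hs ^ 2) := by
        calc |Real.exp (-e * (c * hs) ^ 2) - 1| ≤ 2 * |(-e) * (c * hs) ^ 2| := h1
        _ ≤ 2 * (M * Q ^ 2 * hs ^ 2) := by linarith
      refine ⟨h2, ?_⟩
      have := abs_le.mp h2
      linarith [this.2]
    have hE₂b := hEbound (e₂ n) c₂ (he₂ n hnN) hc₂Q
    have hE₃b := hEbound (e₃ n) c₃ (he₃ n hnN) hc₃Q
    rw [← hE₂def] at hE₂b
    rw [← hE₃def] at hE₃b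
    have hE₂pos : 0 < E₂ := Real.exp_pos _
    have hE₃pos : 0 < E₃ := Real.exp_pos _
    have hE₂2 : |E₂| ≤ 2 := by rw [abs_of_pos hE₂pos]; exact hE₂b.2
    have hE₃2 : |E₃| ≤ 2 := by rw [abs_of_pos hE₃pos]; exact hE₃b.2
    clear_value E₂ E₃
    -- interval memberships
    have htK : t ∈ Set.Icc (a - Q) (b + Q) := ⟨by linarith [ht.1], by linarith [ht.2]⟩
    have htc : ∀ c : ℝ, |c| ≤ Q → t + c * hs ∈ Set.Icc (a - Q) (b + Q) := by
      intro c hc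
      have h1 : |c * hs| ≤ Q := by
        rw [abs_mul, abs_of_pos hhs0]
        calc |c| * hs ≤ Q * 1 := mul_le_mul hc hhs1 hhs0.le hQ0
        _ = Q := mul_one Q
      have h2 := abs_le.mp h1
      exact ⟨by linarith [ht.1, h2.1], by linarith [ht.2, h2.2]⟩
    have htc₂ := htc c₂ hc₂Q
    have htc₃ := htc c₃ hc₃Q
    -- stage values and bounds
    set k1v : ℝ := f t (v n) with hk1vdef
    set k1w : ℝ := f t w with hk1wdef
    have hvR : |v n| ≤ R := by rw [hRdef] at *; linarith
    have hwR : |w| ≤ R := by rw [hRdef] at *; linarith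
    have hk1vB : |k1v| ≤ B := hfB t (v n) htK hvR
    have hk1wB : |k1w| ≤ B := hfB t w htK hwR
    clear_value k1v k1w
    set x2v : ℝ := v n * E₂ + hs * a₂₁ * k1v with hx2vdef
    set x2w : ℝ := w * E₂ + hs * a₂₁ * k1w with hx2wdef
    have hstage2 : ∀ y k : ℝ, |y| ≤ U + 1 → |k| ≤ B → |y * E₂ + hs * a₂₁ * k| ≤ R := by
      intro y k hy hk
      have h1 : |y * E₂| ≤ (U + 1) * 2 := abs_mul_le_of_le hy hE₂2
      have h2 : |hs * a₂₁ * k| ≤ 1 := by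
        have e1 : |a₂₁| * |k| ≤ A * B := mul_le_mul ha21A hk (abs_nonneg _) hA0
        have e2 : hs * (|a₂₁| * |k|) ≤ hs * (A * B) := mul_le_mul_of_nonneg_left e1 hhs0.le
        calc |hs * a₂₁ * k| = hs * (|a₂₁| * |k|) := by
              rw [abs_mul, abs_mul, abs_of_pos hhs0]; ring
        _ ≤ hs * (A * B) := e2
        _ ≤ 1 := hABhs
      calc |y * E₂ + hs * a₂₁ * k| ≤ |y * E₂| + |hs * a₂₁ * k| := abs_add_le _ _
      _ ≤ (U + 1) * 2 + 1 := by linarith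
      _ ≤ R := by rw [hRdef]; linarith
    have hx2vR : |x2v| ≤ R := hstage2 (v n) k1v hvb hk1vB
    have hx2wR : |x2w| ≤ R := hstage2 w k1w (by linarith) hk1wB
    set k2v : ℝ := f (t + c₂ * hs) x2v with hk2vdef
    set k2w : ℝ := f (t + c₂ * hs) x2w with hk2wdef
    have hk2vB : |k2v| ≤ B := hfB _ _ htc₂ hx2vR
    have hk2wB : |k2w| ≤ B := hfB _ _ htc₂ hx2wR
    set x3v : ℝ := v n * E₃ + hs * (a₃₁ * k1v + a₃₂ * k2v) with hx3vdef
    set x3w : ℝ := w * E₃ + hs * (a₃₁ * k1w + a₃₂ * k2w) with hx3wdef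
    have hstage3 : ∀ y k k' : ℝ, |y| ≤ U + 1 → |k| ≤ B → |k'| ≤ B →
        |y * E₃ + hs * (a₃₁ * k + a₃₂ * k')| ≤ R := by
      intro y k k' hy hk hk'
      have h1 : |y * E₃| ≤ (U + 1) * 2 := abs_mul_le_of_le hy hE₃2
      have h3 : |a₃₁ * k + a₃₂ * k'| ≤ A * B := by
        have e1 : |a₃₁| * |k| ≤ |a₃₁| * B := mul_le_mul_of_nonneg_left hk (abs_nonneg _)
        have e2 : |a₃₂| * |k'| ≤ |a₃₂| * B := mul_le_mul_of_nonneg_left hk' (abs_nonneg _)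
        have e3 : (|a₃₁| + |a₃₂|) * B ≤ A * B := mul_le_mul_of_nonneg_right ha3132A hBnn
        calc |a₃₁ * k + a₃₂ * k'| ≤ |a₃₁ * k| + |a₃₂ * k'| := abs_add_le _ _
        _ = |a₃₁| * |k| + |a₃₂| * |k'| := by rw [abs_mul, abs_mul]
        _ ≤ A * B := by linarith
      have h2 : |hs * (a₃₁ * k + a₃₂ * k')| ≤ 1 := by
        rw [abs_mul, abs_of_pos hhs0]
        have e4 : hs * |a₃₁ * k + a₃₂ * k'| ≤ hs * (A * B) :=
          mul_le_mul_of_nonneg_left h3 hhs0.le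
        linarith
      calc |y * E₃ + hs * (a₃₁ * k + a₃₂ * k')| ≤ _ := abs_add_le _ _
      _ ≤ (U + 1) * 2 + 1 := by linarith
      _ ≤ R := by rw [hRdef]; linarith
    have hx3vR : |x3v| ≤ R := hstage3 (v n) k1v k2v hvb hk1vB hk2vB
    have hx3wR : |x3w| ≤ R := hstage3 w k1w k2w (by linarith) hk1wB hk2wB
    set k3v : ℝ := f (t + c₃ * hs) x3v with hk3vdef
    set k3w : ℝ := f (t + c₃ * hs) x3w with hk3wdef
    -- difference estimates (stability)
    set d : ℝ := |v n - w| with hddef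
    have hd0 : 0 ≤ d := abs_nonneg _
    have hk1d : |k1v - k1w| ≤ L * d := by rw [hk1vdef, hk1wdef, hddef]; exact hlip t ht (v n) w
    have hx2d : |x2v - x2w| ≤ C₂ * d := by
      have heq : x2v - x2w = (v n - w) * E₂ + hs * a₂₁ * (k1v - k1w) := by
        rw [hx2vdef, hx2wdef]; ring
      have h1 : |(v n - w) * E₂| ≤ d * 2 := abs_mul_le_of_le (le_of_eq hddef.symm) hE₂2
      have h2 : |hs * a₂₁ * (k1v - k1w)| ≤ 1 * (A * (L * d)) := by
        have e1 : |a₂₁| * |k1v - k1w| ≤ A * (L * d) :=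
          mul_le_mul ha21A hk1d (abs_nonneg _) hA0
        have e2 : hs * (|a₂₁| * |k1v - k1w|) ≤ 1 * (A * (L * d)) :=
          mul_le_mul hhs1 e1 (mul_nonneg (abs_nonneg _) (abs_nonneg _)) one_pos.le
        calc |hs * a₂₁ * (k1v - k1w)| = hs * (|a₂₁| * |k1v - k1w|) := by
              rw [abs_mul, abs_mul, abs_of_pos hhs0]; ring
        _ ≤ 1 * (A * (L * d)) := e2
      rw [heq, hC₂def]
      calc |(v n - w) * E₂ + hs * a₂₁ * (k1v - k1w)|
          ≤ |(v n - w) * E₂| + |hs * a₂₁ * (k1v - k1w)| := abs_add_le _ _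
      _ ≤ d * 2 + 1 * (A * (L * d)) := by linarith
      _ = (2 + A * L) * d := by ring
    have htshift : ∀ c x : ℝ, |c| ≤ Q → |x| ≤ R → |f (t + c * hs) x - f t x| ≤ ε'' := by
      intro c x hc hx
      refine hshift (t + c * hs) t x x (htc c hc) htK hx hx ?_ ?_
      · have h1 : |t + c * hs - t| = |c * hs| := by ring_nf
        rw [h1, abs_mul, abs_of_pos hhs0]
        have := mul_le_mul_of_nonneg_right (show |c| ≤ Q + C₁ by linarith) hhs0.le
        linarith
      · simp only [sub_self, abs_zero]
        exact mul_nonneg (by linarith) hhs0.le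
    have hk2d : |k2v - k2w| ≤ L * (C₂ * d) + 2 * ε'' := by
      have h1 : |f (t + c₂ * hs) x2v - f t x2v| ≤ ε'' := htshift c₂ x2v hc₂Q hx2vR
      have h2 : |f (t + c₂ * hs) x2w - f t x2w| ≤ ε'' := htshift c₂ x2w hc₂Q hx2wR
      have h3 : |f t x2v - f t x2w| ≤ L * |x2v - x2w| := hlip t ht x2v x2w
      have h4 : L * |x2v - x2w| ≤ L * (C₂ * d) := mul_le_mul_of_nonneg_left hx2d hL
      have h5 : |k2v - k2w| ≤ |f (t + c₂ * hs) x2v - f t x2v| + |f t x2v - f t x2w|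
          + |f t x2w - f (t + c₂ * hs) x2w| := by
        rw [hk2vdef, hk2wdef]
        have e1 := abs_add_le (f (t + c₂ * hs) x2v - f t x2v + (f t x2v - f t x2w))
          (f t x2w - f (t + c₂ * hs) x2w)
        have e2 := abs_add_le (f (t + c₂ * hs) x2v - f t x2v) (f t x2v - f t x2w)
        have e3 : f (t + c₂ * hs) x2v - f (t + c₂ * hs) x2w
            = (f (t + c₂ * hs) x2v - f t x2v + (f t x2v - f t x2w))
              + (f t x2w - f (t + c₂ * hs) x2w) := by ring
        rw [e3]
        linarith
      have h2' : |f t x2w - f (t + c₂ * hs) x2w| ≤ ε'' := by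
        rw [abs_sub_comm]; exact h2
      linarith
    have hx3d : |x3v - x3w| ≤ C₃ * d + 2 * A * ε'' := by
      have heq : x3v - x3w = (v n - w) * E₃ + hs * (a₃₁ * (k1v - k1w) + a₃₂ * (k2v - k2w)) := by
        rw [hx3vdef, hx3wdef]; ring
      have h1 : |(v n - w) * E₃| ≤ d * 2 := abs_mul_le_of_le (le_of_eq hddef.symm) hE₃2
      have e1 : |a₃₁| * |k1v - k1w| ≤ A * (L * d) := mul_le_mul ha31A hk1d (abs_nonneg _) hA0
      have e2 : |a₃₂| * |k2v - k2w| ≤ A * (L * (C₂ * d) + 2 * ε'') :=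
        mul_le_mul ha32A hk2d (abs_nonneg _) hA0
      have h2 : |a₃₁ * (k1v - k1w) + a₃₂ * (k2v - k2w)|
          ≤ A * (L * d) + A * (L * (C₂ * d) + 2 * ε'') := by
        calc |a₃₁ * (k1v - k1w) + a₃₂ * (k2v - k2w)|
            ≤ |a₃₁ * (k1v - k1w)| + |a₃₂ * (k2v - k2w)| := abs_add_le _ _
        _ = |a₃₁| * |k1v - k1w| + |a₃₂| * |k2v - k2w| := by rw [abs_mul, abs_mul]
        _ ≤ _ := by linarith
      have h3 : |hs * (a₃₁ * (k1v - k1w) + a₃₂ * (k2v - k2w))|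
          ≤ 1 * (A * (L * d) + A * (L * (C₂ * d) + 2 * ε'')) := by
        rw [abs_mul, abs_of_pos hhs0]
        exact mul_le_mul hhs1 h2 (abs_nonneg _) one_pos.le
      rw [heq, hC₃def]
      calc |(v n - w) * E₃ + hs * (a₃₁ * (k1v - k1w) + a₃₂ * (k2v - k2w))|
          ≤ _ := abs_add_le _ _
      _ ≤ d * 2 + 1 * (A * (L * d) + A * (L * (C₂ * d) + 2 * ε'')) := by linarith
      _ ≤ (2 + A * L * (1 + C₂)) * d + 2 * A * ε'' := by ring_nf; linarith
    have hk3d : |k3v - k3w| ≤ L * (C₃ * d + 2 * A * ε'') + 2 * ε'' := by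
      have h1 : |f (t + c₃ * hs) x3v - f t x3v| ≤ ε'' := htshift c₃ x3v hc₃Q hx3vR
      have h2 : |f (t + c₃ * hs) x3w - f t x3w| ≤ ε'' := htshift c₃ x3w hc₃Q hx3wR
      have h3 : |f t x3v - f t x3w| ≤ L * |x3v - x3w| := hlip t ht x3v x3w
      have h4 : L * |x3v - x3w| ≤ L * (C₃ * d + 2 * A * ε'') := mul_le_mul_of_nonneg_left hx3d hL
      have h5 : |k3v - k3w| ≤ |f (t + c₃ * hs) x3v - f t x3v| + |f t x3v - f t x3w|
          + |f t x3w - f (t + c₃ * hs) x3w| := by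
        rw [hk3vdef, hk3wdef]
        have e1 := abs_add_le (f (t + c₃ * hs) x3v - f t x3v + (f t x3v - f t x3w))
          (f t x3w - f (t + c₃ * hs) x3w)
        have e2 := abs_add_le (f (t + c₃ * hs) x3v - f t x3v) (f t x3v - f t x3w)
        have e3 : f (t + c₃ * hs) x3v - f (t + c₃ * hs) x3w
            = (f (t + c₃ * hs) x3v - f t x3v + (f t x3v - f t x3w))
              + (f t x3w - f (t + c₃ * hs) x3w) := by ring
        rw [e3]
        linarith
      have h2' : |f t x3w - f (t + c₃ * hs) x3w| ≤ ε'' := by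
        rw [abs_sub_comm]; exact h2
      linarith
    -- increment function difference
    set Φv : ℝ := b₁ * k1v + b₂ * k2v + b₃ * k3v with hΦvdef
    set Φw : ℝ := b₁ * k1w + b₂ * k2w + b₃ * k3w with hΦwdef
    have hΦd : |Φv - Φw| ≤ (Λ - 1) * d + Bb * (2 * L * A + 4) * ε'' := by
      have heq : Φv - Φw = b₁ * (k1v - k1w) + b₂ * (k2v - k2w) + b₃ * (k3v - k3w) := by
        rw [hΦvdef, hΦwdef]; ring
      have habs : |b₁ * (k1v - k1w) + b₂ * (k2v - k2w) + b₃ * (k3v - k3w)|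
          ≤ |b₁| * |k1v - k1w| + |b₂| * |k2v - k2w| + |b₃| * |k3v - k3w| := by
        have e0 := abs_add_le (b₁ * (k1v - k1w) + b₂ * (k2v - k2w)) (b₃ * (k3v - k3w))
        have e1 := abs_add_le (b₁ * (k1v - k1w)) (b₂ * (k2v - k2w))
        simp only [abs_mul] at e0 e1 ⊢
        linarith
      have e1 : |b₁| * |k1v - k1w| ≤ Bb * (L * d) := mul_le_mul hb₁Bb hk1d (abs_nonneg _) hBb0
      have e2 : |b₂| * |k2v - k2w| ≤ Bb * (L * (C₂ * d) + 2 * ε'') :=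
        mul_le_mul hb₂Bb hk2d (abs_nonneg _) hBb0
      have e3 : |b₃| * |k3v - k3w| ≤ Bb * (L * (C₃ * d + 2 * A * ε'') + 2 * ε'') :=
        mul_le_mul hb₃Bb hk3d (abs_nonneg _) hBb0
      have hΛ1' : (Λ - 1) * d = Bb * L * (1 + C₂ + C₃) * d := by rw [hΛdef]; ring
      rw [heq]
      calc |b₁ * (k1v - k1w) + b₂ * (k2v - k2w) + b₃ * (k3v - k3w)| ≤ _ := habs
      _ ≤ Bb * (L * d) + Bb * (L * (C₂ * d) + 2 * ε'')
          + Bb * (L * (C₃ * d + 2 * A * ε'') + 2 * ε'') := by linarith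
      _ ≤ (Λ - 1) * d + Bb * (2 * L * A + 4) * ε'' := by rw [hΛ1']; ring_nf; linarith
    -- consistency : stage values at w are close to w
    have hUE : ∀ EE : ℝ, |EE - 1| ≤ 2 * (M * Q ^ 2 * hs ^ 2) →
        |w * (EE - 1)| ≤ 2 * U * M * Q ^ 2 * hs := by
      intro EE hEE
      have h1 : |w * (EE - 1)| ≤ U * (2 * (M * Q ^ 2 * hs ^ 2)) := abs_mul_le_of_le hwU hEE
      have h4 : 0 ≤ U * (M * Q ^ 2) * hs :=
        mul_nonneg (mul_nonneg hUnn (mul_nonneg hM (sq_nonneg Q))) hhs0.le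
      have h5 : U * (M * Q ^ 2) * hs * hs ≤ U * (M * Q ^ 2) * hs * 1 :=
        mul_le_mul_of_nonneg_left hhs1 h4
      linarith [h1]
    have hx2w_w : |x2w - w| ≤ C₁ * hs := by
      have heq : x2w - w = w * (E₂ - 1) + hs * a₂₁ * k1w := by rw [hx2wdef]; ring
      have h1 := hUE E₂ hE₂b.1
      have h2 : |hs * a₂₁ * k1w| ≤ hs * (A * B) := by
        have e1 : |a₂₁| * |k1w| ≤ A * B := mul_le_mul ha21A hk1wB (abs_nonneg _) hA0
        calc |hs * a₂₁ * k1w| = hs * (|a₂₁| * |k1w|) := by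
              rw [abs_mul, abs_mul, abs_of_pos hhs0]; ring
        _ ≤ hs * (A * B) := mul_le_mul_of_nonneg_left e1 hhs0.le
      rw [heq, hC₁def]
      calc |w * (E₂ - 1) + hs * a₂₁ * k1w| ≤ _ := abs_add_le _ _
      _ ≤ 2 * U * M * Q ^ 2 * hs + hs * (A * B) := by linarith
      _ = (2 * U * M * Q ^ 2 + A * B) * hs := by ring
    have hx3w_w : |x3w - w| ≤ C₁ * hs := by
      have heq : x3w - w = w * (E₃ - 1) + hs * (a₃₁ * k1w + a₃₂ * k2w) := by
        rw [hx3wdef]; ring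
      have h1 := hUE E₃ hE₃b.1
      have h3 : |a₃₁ * k1w + a₃₂ * k2w| ≤ A * B := by
        have e1 : |a₃₁| * |k1w| ≤ |a₃₁| * B := mul_le_mul_of_nonneg_left hk1wB (abs_nonneg _)
        have e2 : |a₃₂| * |k2w| ≤ |a₃₂| * B := mul_le_mul_of_nonneg_left hk2wB (abs_nonneg _)
        have e3 : (|a₃₁| + |a₃₂|) * B ≤ A * B := mul_le_mul_of_nonneg_right ha3132A hBnn
        calc |a₃₁ * k1w + a₃₂ * k2w| ≤ |a₃₁ * k1w| + |a₃₂ * k2w| := abs_add_le _ _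
        _ = |a₃₁| * |k1w| + |a₃₂| * |k2w| := by rw [abs_mul, abs_mul]
        _ ≤ A * B := by linarith
      have h2 : |hs * (a₃₁ * k1w + a₃₂ * k2w)| ≤ hs * (A * B) := by
        rw [abs_mul, abs_of_pos hhs0]
        exact mul_le_mul_of_nonneg_left h3 hhs0.le
      rw [heq, hC₁def]
      calc |w * (E₃ - 1) + hs * (a₃₁ * k1w + a₃₂ * k2w)| ≤ _ := abs_add_le _ _
      _ ≤ 2 * U * M * Q ^ 2 * hs + hs * (A * B) := by linarith
      _ = (2 * U * M * Q ^ 2 + A * B) * hs := by ring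
    have hQhs : 0 ≤ Q * hs := mul_nonneg hQ0 hhs0.le
    have hcshift : ∀ c : ℝ, |c| ≤ Q → |t + c * hs - t| ≤ (Q + C₁) * hs := by
      intro c hc
      have h1 : |t + c * hs - t| = |c * hs| := by ring_nf
      rw [h1, abs_mul, abs_of_pos hhs0]
      have := mul_le_mul_of_nonneg_right (show |c| ≤ Q + C₁ by linarith) hhs0.le
      linarith
    have hCQhs : C₁ * hs ≤ (Q + C₁) * hs := by linarith
    have hk2w_g : |k2w - k1w| ≤ ε'' := by
      rw [hk2wdef, hk1wdef]
      exact hshift (t + c₂ * hs) t x2w w htc₂ htK hx2wR hwR (hcshift c₂ hc₂Q)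
        (le_trans hx2w_w hCQhs)
    have hk3w_g : |k3w - k1w| ≤ ε'' := by
      rw [hk3wdef, hk1wdef]
      exact hshift (t + c₃ * hs) t x3w w htc₃ htK hx3wR hwR (hcshift c₃ hc₃Q)
        (le_trans hx3w_w hCQhs)
    have hΦg : |Φw - k1w| ≤ Bb * ε'' := by
      have heq : Φw - k1w = b₂ * (k2w - k1w) + b₃ * (k3w - k1w) := by
        rw [hΦwdef]; linear_combination k1w * hb
      have e1 : |b₂| * |k2w - k1w| ≤ |b₂| * ε'' :=
        mul_le_mul_of_nonneg_left hk2w_g (abs_nonneg _)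
      have e2 : |b₃| * |k3w - k1w| ≤ |b₃| * ε'' :=
        mul_le_mul_of_nonneg_left hk3w_g (abs_nonneg _)
      have e3 : (|b₂| + |b₃|) * ε'' ≤ Bb * ε'' :=
        mul_le_mul_of_nonneg_right hb23Bb hε''0.le
      rw [heq]
      calc |b₂ * (k2w - k1w) + b₃ * (k3w - k1w)|
          ≤ |b₂ * (k2w - k1w)| + |b₃ * (k3w - k1w)| := abs_add_le _ _
      _ = |b₂| * |k2w - k1w| + |b₃| * |k3w - k1w| := by rw [abs_mul, abs_mul]
      _ ≤ Bb * ε'' := by linarith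
    -- consistency : integral estimate
    have hsub : Set.uIcc t (t + hs) ⊆ Set.Icc a b := by
      rw [Set.uIcc_of_le (by linarith)]
      intro s hsx
      exact ⟨le_trans ht.1 hsx.1, le_trans hsx.2 hth.2⟩
    have hgint : IntervalIntegrable (fun s => f s (u s)) MeasureTheory.volume t (t + hs) :=
      (hgc.mono hsub).intervalIntegrable
    have hFTC : ∫ s in t..(t + hs), f s (u s) = u (t + hs) - u t :=
      intervalIntegral.integral_eq_sub_of_hasDerivAt (fun x hx => hu x (hsub hx)) hgint
    have hint : |u (t + hs) - w - hs * k1w| ≤ ε'' * hs := by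
      have heq2 : ∫ s in t..(t + hs), (f s (u s) - k1w) = u (t + hs) - w - hs * k1w := by
        rw [intervalIntegral.integral_sub hgint intervalIntegrable_const,
          intervalIntegral.integral_const, hFTC, hwdef]
        rw [smul_eq_mul]
        ring
      have hb1 : ∀ s ∈ Set.uIoc t (t + hs), ‖f s (u s) - k1w‖ ≤ ε'' := by
        intro s hsx
        rw [Set.uIoc_of_le (by linarith)] at hsx
        have hsab : s ∈ Set.Icc a b := ⟨by linarith [ht.1, hsx.1], by linarith [hth.2, hsx.2]⟩
        have hdist : dist s t < δg := by
          rw [Real.dist_eq, abs_of_pos (by linarith [hsx.1] : (0:ℝ) < s - t)]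
          linarith [hsx.2]
        have h6 := hδg s hsab t ht hdist
        rw [Real.dist_eq] at h6
        rw [Real.norm_eq_abs, hk1wdef, hwdef]
        exact h6.le
      have h7 := intervalIntegral.norm_integral_le_of_norm_le_const hb1
      rw [heq2, Real.norm_eq_abs] at h7
      have habs : |t + hs - t| = hs := by
        rw [abs_of_pos (by linarith : (0:ℝ) < t + hs - t)]; ring
      rw [habs] at h7
      exact h7
    -- assemble
    have hsplit : v (n + 1) - u (t + hs) =
        (v n - w) + hs * (Φv - Φw) + hs * (Φw - k1w) - (u (t + hs) - w - hs * k1w) := by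
      rw [hv', hwdef]; ring
    have h1 : |hs * (Φv - Φw)| ≤ hs * ((Λ - 1) * d + Bb * (2 * L * A + 4) * ε'') := by
      rw [abs_mul, abs_of_pos hhs0]
      exact mul_le_mul_of_nonneg_left hΦd hhs0.le
    have h2 : |hs * (Φw - k1w)| ≤ hs * (Bb * ε'') := by
      rw [abs_mul, abs_of_pos hhs0]
      exact mul_le_mul_of_nonneg_left hΦg hhs0.le
    have hCte : hs * (Ct * ε'') = hs * ε' := by rw [hCtε]
    have hCte2 : hs * (Bb * (2 * L * A + 4) * ε'') + hs * (Bb * ε'') + ε'' * hs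
        = hs * (Ct * ε'') := by rw [hCtdef]; ring
    have hhsd : 0 ≤ hs * d := mul_nonneg hhs0.le hd0
    calc |v (n + 1) - u (t + hs)|
        = |(v n - w) + hs * (Φv - Φw) + hs * (Φw - k1w) - (u (t + hs) - w - hs * k1w)| := by
          rw [hsplit]
    _ ≤ |(v n - w) + hs * (Φv - Φw) + hs * (Φw - k1w)| + |u (t + hs) - w - hs * k1w| :=
          abs_sub _ _
    _ ≤ |(v n - w) + hs * (Φv - Φw)| + |hs * (Φw - k1w)| + |u (t + hs) - w - hs * k1w| := by
          have := abs_add_le ((v n - w) + hs * (Φv - Φw)) (hs * (Φw - k1w))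
          linarith
    _ ≤ |v n - w| + |hs * (Φv - Φw)| + |hs * (Φw - k1w)| + |u (t + hs) - w - hs * k1w| := by
          have := abs_add_le (v n - w) (hs * (Φv - Φw))
          linarith
    _ ≤ d + hs * ((Λ - 1) * d + Bb * (2 * L * A + 4) * ε'') + hs * (Bb * ε'') + ε'' * hs := by
          rw [hddef] at *
          linarith
    _ ≤ (1 + Λ * hs) * d + hs * ε' := by linarith [hCte, hCte2, hhsd]
  -- discrete Grönwall induction
  have hΛhs0 : 0 ≤ Λ * hs := mul_nonneg hΛ0.le hhs0.le
  set ρ : ℝ := 1 + Λ * hs with hρdef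
  clear_value ρ
  have hρ1 : 1 ≤ ρ := by rw [hρdef]; linarith
  have hρ0 : 0 ≤ ρ := by linarith
  have hρexp : ρ ≤ Real.exp (Λ * hs) := by
    have := Real.add_one_le_exp (Λ * hs)
    rw [hρdef]; linarith
  have hεΛ0 : 0 ≤ ε' / Λ := le_of_lt (div_pos hε'0 hΛ0)
  have hbound : ∀ n : ℕ, n ≤ N → (ρ ^ n - 1) * (ε' / Λ) ≤ εm / 2 := by
    intro n hn
    have h1 : ρ ^ n ≤ Real.exp (Λ * hs) ^ n := pow_le_pow_left₀ hρ0 hρexp n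
    have h2 : Real.exp (Λ * hs) ^ n = Real.exp ((n : ℝ) * (Λ * hs)) :=
      (Real.exp_nat_mul _ n).symm
    have h3 : (n : ℝ) * (Λ * hs) ≤ Λ * (b - a) := by
      have hnle : (n : ℝ) ≤ (N : ℝ) := by exact_mod_cast hn
      have e1 : (n : ℝ) * hs ≤ (N : ℝ) * hs := mul_le_mul_of_nonneg_right hnle hhs0.le
      have e2 : Λ * ((n : ℝ) * hs) ≤ Λ * ((N : ℝ) * hs) :=
        mul_le_mul_of_nonneg_left e1 hΛ0.le
      rw [hNhs] at e2
      linarith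
    have h4 : Real.exp ((n : ℝ) * (Λ * hs)) ≤ Real.exp (Λ * (b - a)) := Real.exp_le_exp.mpr h3
    have h5 : ρ ^ n ≤ Real.exp (Λ * (b - a)) := by
      calc ρ ^ n ≤ Real.exp (Λ * hs) ^ n := h1
      _ = _ := h2
      _ ≤ _ := h4
    have h6 : Real.exp (Λ * (b - a)) * (ε' / Λ) = εm / 2 := by
      rw [hε'def]
      field_simp
    have h7 : (ρ ^ n - 1) * (ε' / Λ) ≤ Real.exp (Λ * (b - a)) * (ε' / Λ) := by
      have e3 : ρ ^ n - 1 ≤ Real.exp (Λ * (b - a)) := by linarith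
      exact mul_le_mul_of_nonneg_right e3 hεΛ0
    linarith
  have main : ∀ n : ℕ, n ≤ N → |v n - u (a + (n : ℝ) * hs)| ≤ (ρ ^ n - 1) * (ε' / Λ) := by
    intro n
    induction n with
    | zero =>
      intro _
      simp [hv0]
    | succ n ih =>
      intro hn
      have hnN : n < N := Nat.lt_of_succ_le hn
      have ihn := ih hnN.le
      have hd1 : |v n - u (a + (n : ℝ) * hs)| ≤ 1 := by
        have := hbound n hnN.le
        linarith
      have hkey := key n hnN hd1
      have halg : (ρ ^ (n + 1) - 1) * (ε' / Λ) = ρ * ((ρ ^ n - 1) * (ε' / Λ)) + hs * ε' := by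
        rw [pow_succ, hρdef]
        field_simp
        ring
      calc |v (n + 1) - u (a + ((n + 1 : ℕ) : ℝ) * hs)|
          ≤ ρ * |v n - u (a + (n : ℝ) * hs)| + hs * ε' := hkey
      _ ≤ ρ * ((ρ ^ n - 1) * (ε' / Λ)) + hs * ε' := by
          have e1 := mul_le_mul_of_nonneg_left ihn hρ0
          linarith
      _ = (ρ ^ (n + 1) - 1) * (ε' / Λ) := halg.symm
  intro n hn
  have h1 := main n hn
  have h2 := hbound n hn
  have h3 : εm / 2 < ε := by
    have : εm ≤ ε := min_le_left _ _
    linarith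
  linarith
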